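/- Let p be an odd prime, let r be an integer with 0 ≤ r ≤ (p-1)/2, and let u, α ∈ F_p. Then in the polynomial ring F_p[x,y] one has the identity - Σ_{a ∈ F_p^×} ((α-u²)·a·x² - 2u·xy - a^{-1}·y²)^r = s_r(u,α) · x^r y^r. -/

import Mathlib

open MvPolynomial

/-- `s_r(u,α) = (-1)^r · Σ_{i ∈ S_r} (-1)^{(r-i)/2} · C(r,i) · C(r-i,(r-i)/2)
· (α-u²)^{(r-i)/2} · (2u)^i` where `S_r` is the set of `0 ≤ i ≤ r` of the same parity as `r`. -/
def sCoef (p r : ℕ) (u α : ZMod p) : ZMod p :=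
  (-1) ^ r * ∑ i ∈ (Finset.range (r + 1)).filter (fun i => i % 2 = r % 2),
    (-1) ^ ((r - i) / 2) * (r.choose i : ZMod p) * ((r - i).choose ((r - i) / 2) : ZMod p) *
      (α - u ^ 2) ^ ((r - i) / 2) * (2 * u) ^ i

lemma char_sum (p : ℕ) [Fact p.Prime] (hodd : Odd p) (m k : ℕ)
    (hm : m ≤ (p - 1) / 2) (hk : k ≤ (p - 1) / 2) :
    ∑ a : (ZMod p)ˣ, ((a : ZMod p) ^ m * (((a⁻¹ : (ZMod p)ˣ) : ZMod p)) ^ k)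
      = if m = k then (-1 : ZMod p) else 0 := by
  classical
  have hp2 : 2 ≤ p := (Fact.out : p.Prime).two_le
  have hp3 : 3 ≤ p := by have := Nat.odd_iff.mp hodd; omega
  have hmul : k * (p - 1) = k * (p - 2) + k := by
    rw [← Nat.mul_succ]; congr 1; omega
  have key : ∀ a : (ZMod p)ˣ, (a : ZMod p) ^ m * (((a⁻¹ : (ZMod p)ˣ) : ZMod p)) ^ k
      = (a : ZMod p) ^ (m + k * (p - 2)) := by
    intro a
    have h2 : a⁻¹ = a ^ (p - 2) := by
      refine inv_eq_of_mul_eq_one_right ?_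
      have h3 : a * a ^ (p - 2) = a ^ (p - 2 + 1) := (pow_succ' a (p - 2)).symm
      rw [h3]
      have e : p - 2 + 1 = p - 1 := by omega
      rw [e]
      exact ZMod.units_pow_card_sub_one_eq_one p a
    rw [h2, Units.val_pow_eq_pow_val, ← pow_mul, ← pow_add, mul_comm (p-2) k]
  simp_rw [key]
  have hsum := FiniteField.sum_pow_units (ZMod p) (m + k * (p - 2))
  rw [ZMod.card] at hsum
  rw [hsum]
  have hiff : (p - 1 ∣ m + k * (p - 2)) ↔ m = k := by
    constructor
    · intro h
      rcases le_total m k with hle | hle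
      · have hd : p - 1 ∣ k - m := by
          have e : k * (p - 1) - (m + k * (p - 2)) = k - m := by omega
          rw [← e]
          exact Nat.dvd_sub (dvd_mul_left (p - 1) k) h
        have h0 : k - m = 0 := Nat.eq_zero_of_dvd_of_lt hd (by omega)
        omega
      · have hd : p - 1 ∣ m - k := by
          have e : (m + k * (p - 2)) - k * (p - 1) = m - k := by omega
          rw [← e]
          exact Nat.dvd_sub h (dvd_mul_left (p - 1) k)
        have h0 : m - k = 0 := Nat.eq_zero_of_dvd_of_lt hd (by omega)
        omega
    · rintro rfl
      have e : m + m * (p - 2) = m * (p - 1) := by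
        have h4 : m * (p - 1) = m * (p - 2) + m := by rw [← Nat.mul_succ]; congr 1; omega
        omega
      rw [e]
      exact dvd_mul_left _ _
  by_cases hcase : m = k
  · rw [if_pos hcase, if_pos (hiff.mpr hcase)]
  · rw [if_neg hcase, if_neg (fun h => hcase (hiff.mp h))]

lemma choose_swap {r m : ℕ} (h : 2 * m ≤ r) :
    r.choose m * (r - m).choose (r - 2 * m) = r.choose (r - 2 * m) * (2 * m).choose m := by
  have h1 := Nat.choose_mul (n := r) (show r - 2 * m ≤ r - m by omega)
  rw [Nat.choose_symm (show m ≤ r by omega)] at h1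
  have e2 : r - (r - 2 * m) = 2 * m := by omega
  have e3 : r - m - (r - 2 * m) = m := by omega
  rw [e2, e3] at h1
  exact h1

lemma sCoef_eq (p r : ℕ) (u α : ZMod p) :
    sCoef p r u α = ∑ m ∈ Finset.range (r / 2 + 1),
      (-1) ^ (r - m) * (r.choose m : ZMod p) * ((r - m).choose (r - 2 * m) : ZMod p) *
        (α - u ^ 2) ^ m * (2 * u) ^ (r - 2 * m) := by
  unfold sCoef
  rw [Finset.mul_sum]
  refine Finset.sum_nbij' (i := fun i => (r - i) / 2) (j := fun m => r - 2 * m) ?_ ?_ ?_ ?_ ?_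
  · intro i hi
    simp only [Finset.mem_filter, Finset.mem_range] at hi ⊢
    omega
  · intro m hm
    simp only [Finset.mem_filter, Finset.mem_range] at hm ⊢
    omega
  · intro i hi
    simp only [Finset.mem_filter, Finset.mem_range] at hi
    omega
  · intro m hm
    simp only [Finset.mem_range] at hm
    omega
  · intro i hi
    simp only [Finset.mem_filter, Finset.mem_range] at hi
    obtain ⟨m, hm⟩ : ∃ m, (r - i) / 2 = m := ⟨_, rfl⟩
    have h2m : 2 * m ≤ r := by omega
    have hi' : i = r - 2 * m := by omega
    have hri : r - i = 2 * m := by omega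
    rw [hm, hri, hi']
    have hsign : ((-1 : ZMod p)) ^ r * ((-1 : ZMod p)) ^ m = (-1) ^ (r - m) := by
      have h' : (-1 : ZMod p) ^ r = (-1) ^ (r - m) * (-1) ^ m := by
        rw [← pow_add]; congr 1; omega
      rw [h', mul_assoc, ← pow_add, ← two_mul, pow_mul, neg_one_sq, one_pow, mul_one]
    rw [show ((-1 : ZMod p)) ^ r * ((-1) ^ m * (r.choose (r - 2 * m) : ZMod p) *
          ((2 * m).choose m : ZMod p) * (α - u ^ 2) ^ m * (2 * u) ^ (r - 2 * m))
        = ((-1 : ZMod p) ^ r * (-1) ^ m) *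
          ((r.choose (r - 2 * m) * (2 * m).choose m : ℕ) : ZMod p) *
          ((α - u ^ 2) ^ m * (2 * u) ^ (r - 2 * m)) from by push_cast; ring]
    rw [hsign, ← choose_swap h2m]
    push_cast
    ring

/-- For an odd prime `p`, `0 ≤ r ≤ (p-1)/2` and `u, α ∈ F_p`, in `F_p[x,y]` one has
`- Σ_{a ∈ F_p^×} ((α-u²)·a·x² - 2u·xy - a⁻¹·y²)^r = s_r(u,α) · x^r y^r`. -/
theorem sum_eq_sCoef (p : ℕ) [Fact p.Prime] (hodd : Odd p)
    (r : ℕ) (hr : r ≤ (p - 1) / 2) (u α : ZMod p) :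
    - ∑ a : (ZMod p)ˣ,
        (C ((α - u ^ 2) * (a : ZMod p)) * (X 0 : MvPolynomial (Fin 2) (ZMod p)) ^ 2
          - C (2 * u) * X 0 * X 1
          - C (((a⁻¹ : (ZMod p)ˣ) : ZMod p)) * X 1 ^ 2) ^ r
      = C (sCoef p r u α) * X 0 ^ r * X 1 ^ r := by
  classical
  set A : MvPolynomial (Fin 2) (ZMod p) := C (α - u ^ 2) * X 0 ^ 2 with hA
  set B : MvPolynomial (Fin 2) (ZMod p) := -(C (2 * u) * X 0 * X 1) with hB
  set D : MvPolynomial (Fin 2) (ZMod p) := -(X 1 ^ 2) with hD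
  have hPa : ∀ a : (ZMod p)ˣ,
      (C ((α - u ^ 2) * (a : ZMod p)) * (X 0 : MvPolynomial (Fin 2) (ZMod p)) ^ 2
          - C (2 * u) * X 0 * X 1
          - C (((a⁻¹ : (ZMod p)ˣ) : ZMod p)) * X 1 ^ 2)
        = C (a : ZMod p) * A + (B + C (((a⁻¹ : (ZMod p)ˣ) : ZMod p)) * D) := by
    intro a
    rw [hA, hB, hD, map_mul]
    ring
  -- expand the power as a double binomial sum
  have expand : ∀ a : (ZMod p)ˣ,
      (C (a : ZMod p) * A + (B + C (((a⁻¹ : (ZMod p)ˣ) : ZMod p)) * D)) ^ r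
        = ∑ m ∈ Finset.range (r + 1), ∑ j ∈ Finset.range (r - m + 1),
            C ((a : ZMod p) ^ m * (((a⁻¹ : (ZMod p)ˣ) : ZMod p)) ^ (r - m - j)) *
              (A ^ m * B ^ j * D ^ (r - m - j) *
                (((r - m).choose j : MvPolynomial (Fin 2) (ZMod p))) *
                ((r.choose m : MvPolynomial (Fin 2) (ZMod p)))) := by
    intro a
    rw [add_pow]
    refine Finset.sum_congr rfl ?_
    intro m hm
    rw [add_pow, Finset.mul_sum, Finset.sum_mul]
    refine Finset.sum_congr rfl ?_
    intro j hj
    rw [map_mul, map_pow, map_pow, mul_pow, mul_pow]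
    ring
  simp_rw [hPa, expand]
  rw [Finset.sum_comm]
  have step1 : ∀ m ∈ Finset.range (r + 1),
      (∑ a : (ZMod p)ˣ, ∑ j ∈ Finset.range (r - m + 1),
          C ((a : ZMod p) ^ m * (((a⁻¹ : (ZMod p)ˣ) : ZMod p)) ^ (r - m - j)) *
            (A ^ m * B ^ j * D ^ (r - m - j) *
              (((r - m).choose j : MvPolynomial (Fin 2) (ZMod p))) *
              ((r.choose m : MvPolynomial (Fin 2) (ZMod p)))))
        = ∑ j ∈ Finset.range (r - m + 1),
            (if j = r - 2 * m ∧ 2 * m ≤ r then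
              -(A ^ m * B ^ j * D ^ (r - m - j) *
                (((r - m).choose j : MvPolynomial (Fin 2) (ZMod p))) *
                ((r.choose m : MvPolynomial (Fin 2) (ZMod p)))) else 0) := by
    intro m hm
    simp only [Finset.mem_range] at hm
    rw [Finset.sum_comm]
    refine Finset.sum_congr rfl ?_
    intro j hj
    simp only [Finset.mem_range] at hj
    rw [← Finset.sum_mul, ← map_sum,
      char_sum p hodd m (r - m - j) (by omega) (by omega)]
    have hcond : (m = r - m - j) ↔ (j = r - 2 * m ∧ 2 * m ≤ r) := by omega
    by_cases hc : j = r - 2 * m ∧ 2 * m ≤ r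
    · rw [if_pos (hcond.mpr hc), if_pos hc, map_neg, map_one]
      ring
    · rw [if_neg (fun h => hc (hcond.mp h)), if_neg hc, map_zero, zero_mul]
  rw [Finset.sum_congr rfl step1]
  have step2 : ∀ m ∈ Finset.range (r + 1),
      (∑ j ∈ Finset.range (r - m + 1),
          (if j = r - 2 * m ∧ 2 * m ≤ r then
            -(A ^ m * B ^ j * D ^ (r - m - j) *
              (((r - m).choose j : MvPolynomial (Fin 2) (ZMod p))) *
              ((r.choose m : MvPolynomial (Fin 2) (ZMod p)))) else 0))
        = if 2 * m ≤ r then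
            -(A ^ m * B ^ (r - 2 * m) * D ^ m *
              (((r - m).choose (r - 2 * m) : MvPolynomial (Fin 2) (ZMod p))) *
              ((r.choose m : MvPolynomial (Fin 2) (ZMod p)))) else 0 := by
    intro m hm
    simp only [Finset.mem_range] at hm
    by_cases h2m : 2 * m ≤ r
    · simp only [h2m, and_true]
      rw [Finset.sum_ite_eq' (Finset.range (r - m + 1)) (r - 2 * m)]
      rw [if_pos (Finset.mem_range.mpr (by omega)),
        (show r - m - (r - 2 * m) = m by omega), if_pos trivial]
    · simp only [h2m, and_false, if_false, Finset.sum_const_zero]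
  rw [Finset.sum_congr rfl step2]
  have hfil : Finset.filter (fun m => 2 * m ≤ r) (Finset.range (r + 1))
      = Finset.range (r / 2 + 1) := by
    ext x
    simp only [Finset.mem_filter, Finset.mem_range]
    omega
  rw [← Finset.sum_filter, hfil]
  rw [← Finset.sum_neg_distrib]
  simp only [neg_neg]
  rw [sCoef_eq, map_sum, Finset.sum_mul, Finset.sum_mul]
  refine Finset.sum_congr rfl ?_
  intro m hm
  simp only [Finset.mem_range] at hm
  have h2m : 2 * m ≤ r := by omega
  have hx : (X 0 : MvPolynomial (Fin 2) (ZMod p)) ^ r = X 0 ^ (2 * m) * X 0 ^ (r - 2 * m) := by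
    rw [← pow_add]; congr 1; omega
  have hy : (X 1 : MvPolynomial (Fin 2) (ZMod p)) ^ r = X 1 ^ (r - 2 * m) * X 1 ^ (2 * m) := by
    rw [← pow_add]; congr 1; omega
  have hs : ((-1 : MvPolynomial (Fin 2) (ZMod p))) ^ (r - m)
      = (-1) ^ (r - 2 * m) * (-1) ^ m := by
    rw [← pow_add]; congr 1; omega
  simp only [hA, hB, hD, map_mul, map_pow, map_neg, map_one, map_natCast]
  rw [hx, hy, hs, neg_pow, neg_pow]
  ring
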